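/- arXiv:1806.04490 — 2 statements merged into one kernel-verified Lean document; each statement's English description precedes it below -/
import Mathlib

section
/- Let f ∈ C_0(D) (i.e., ⟨π,f⟩ = 0). Then for any δ > 0 and any norm ‖·‖ on ℝ^D, there exists C_δ < ∞ such that for all t ≥ 0 and all x ∈ D, |exp(t(P^π_D − I)) f (x)| ≤ C_δ e^{−t(λ+γ−δ)} ‖f‖, where γ is the spectral gap of P_D. -/
open Matrix BigOperators

/-- `σ` is a (complex) eigenvalue of the matrix `M`. -/
def IsEigval {D : Type*} [Fintype D] [DecidableEq D] (M : Matrix D D ℂ) (σ : ℂ) : Prop :=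
  ∃ v : D → ℂ, v ≠ 0 ∧ M.mulVec v = σ • v

/-- Irreducibility of a nonnegative matrix. -/
def MatIrreducible {D : Type*} [Fintype D] [DecidableEq D] (P : Matrix D D ℝ) : Prop :=
  ∀ x y : D, ∃ n : ℕ, 0 < (P ^ n) x y


attribute [local instance] Matrix.linftyOpNormedRing Matrix.linftyOpNormedAlgebra

set_option linter.unusedSectionVars false

section Aux
variable {D : Type*} [Fintype D] [DecidableEq D]


lemma aux_norm_equiv {D : Type*} [Fintype D] [DecidableEq D] [Nonempty D]
    (nrm : Seminorm ℝ (D → ℝ)) (hnrm : ∀ g : D → ℝ, nrm g = 0 → g = 0) :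
    ∃ K : ℝ, 0 ≤ K ∧ ∀ g : D → ℝ, ‖g‖ ≤ K * nrm g := by
  -- nrm is Lipschitz w.r.t. sup norm
  have hbound : ∃ B : ℝ, ∀ g : D → ℝ, nrm g ≤ B * ‖g‖ := by
    refine ⟨∑ x : D, nrm (Pi.single x 1), fun g => ?_⟩
    have hg : g = ∑ x : D, g x • (Pi.single x (1:ℝ) : D → ℝ) := by
      ext y
      simp [Pi.single_apply, Finset.sum_ite_eq, mul_comm]
    calc nrm g = nrm (∑ x : D, g x • (Pi.single x (1:ℝ) : D → ℝ)) := by rw [← hg]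
    _ ≤ ∑ x : D, nrm (g x • (Pi.single x (1:ℝ) : D → ℝ)) := Finset.le_sum_of_subadditive (fun h => nrm h) (map_zero nrm).le (map_add_le_add nrm) _ _
    _ ≤ ∑ x : D, nrm (Pi.single x 1) * ‖g‖ := by
        refine Finset.sum_le_sum fun x _ => ?_
        rw [map_smul_eq_mul, mul_comm]
        have h1 : ‖g x‖ ≤ ‖g‖ := norm_le_pi_norm g x
        have h2 : (0:ℝ) ≤ nrm (Pi.single x (1:ℝ) : D → ℝ) := apply_nonneg nrm _
        exact mul_le_mul_of_nonneg_left h1 h2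
    _ = (∑ x : D, nrm (Pi.single x 1)) * ‖g‖ := by rw [Finset.sum_mul]
  obtain ⟨B, hB⟩ := hbound
  have hcont : Continuous fun g : D → ℝ => nrm g := by
    have : LipschitzWith (Real.toNNReal B) fun g : D → ℝ => nrm g := by
      refine LipschitzWith.of_dist_le_mul fun g h => ?_
      have h1 : nrm g - nrm h ≤ nrm (g - h) := sub_le_iff_le_add.2 (by
        simpa using map_add_le_add nrm (g - h) h)
      have h2 : nrm h - nrm g ≤ nrm (g - h) := by
        have := map_add_le_add nrm (h - g) g
        simp only [sub_add_cancel] at this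
        calc nrm h - nrm g ≤ nrm (h - g) := by linarith
        _ = nrm (g - h) := by rw [← neg_sub, map_neg_eq_map]
      have h3 : dist (nrm g) (nrm h) ≤ nrm (g - h) := by
        rw [Real.dist_eq, abs_le]; constructor <;> linarith
      refine h3.trans ?_
      calc nrm (g - h) ≤ B * ‖g - h‖ := hB _
      _ ≤ Real.toNNReal B * dist g h := by
          rw [dist_eq_norm]
          gcongr
          exact le_max_left _ _
    exact this.continuous
  have hsphere : IsCompact (Metric.sphere (0 : D → ℝ) 1) := isCompact_sphere _ _
  have hne : (Metric.sphere (0 : D → ℝ) 1).Nonempty :=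
    NormedSpace.sphere_nonempty.2 zero_le_one
  obtain ⟨g0, hg0, hmin⟩ := hsphere.exists_isMinOn hne (hcont.continuousOn)
  have hm : 0 < nrm g0 := by
    rcases (apply_nonneg nrm g0).lt_or_eq with h | h
    · exact h
    · exfalso
      have := hnrm g0 h.symm
      rw [this] at hg0
      simp at hg0
  refine ⟨(nrm g0)⁻¹, inv_nonneg.2 hm.le, fun g => ?_⟩
  rcases eq_or_ne g 0 with rfl | hgne
  · simp
  · have hgn : (0:ℝ) < ‖g‖ := norm_pos_iff.2 hgne
    have hmem : ‖g‖⁻¹ • g ∈ Metric.sphere (0 : D → ℝ) 1 := by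
      simp [norm_smul, abs_of_nonneg (inv_nonneg.2 hgn.le), inv_mul_cancel₀ hgn.ne']
    have := hmin hmem
    have h4 : nrm g0 ≤ ‖g‖⁻¹ * nrm g := by
      simpa [map_smul_eq_mul, abs_of_nonneg (inv_nonneg.2 hgn.le)] using this
    have h5 := mul_le_mul_of_nonneg_left h4 hgn.le
    rw [← mul_assoc, mul_inv_cancel₀ hgn.ne', one_mul] at h5
    rw [le_inv_mul_iff₀ hm]
    linarith [h5, mul_comm (nrm g0) ‖g‖]


lemma aux_pow_nonneg (P : Matrix D D ℝ) (hnn : ∀ x y, 0 ≤ P x y) :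
    ∀ n x y, 0 ≤ (P ^ n) x y := by
  intro n
  induction n with
  | zero => intro x y; by_cases h : x = y <;> simp [Matrix.one_apply, h]
  | succ n ih =>
    intro x y
    rw [pow_succ, Matrix.mul_apply]
    exact Finset.sum_nonneg fun z _ => mul_nonneg (ih x z) (hnn z y)

lemma aux_transpose_pow_mulVec (P : Matrix D D ℝ) (lam : ℝ) (π : D → ℝ)
    (hπeig : Pᵀ.mulVec π = (1 - lam) • π) :
    ∀ n, (Pᵀ ^ n).mulVec π = ((1 - lam) ^ n) • π := by
  intro n
  induction n with
  | zero => simp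
  | succ n ih =>
    rw [pow_succ, ← Matrix.mulVec_mulVec, hπeig, Matrix.mulVec_smul, ih, smul_smul, pow_succ]
    ring_nf

lemma aux_pi_pos (P : Matrix D D ℝ) (hnn : ∀ x y, 0 ≤ P x y) (hirr : MatIrreducible P)
    (lam : ℝ) (π : D → ℝ) (hπnn : ∀ x, 0 ≤ π x) (hπsum : ∑ x, π x = 1)
    (hπeig : Pᵀ.mulVec π = (1 - lam) • π) :
    ∀ x, 0 < π x := by
  by_contra h
  push_neg at h
  obtain ⟨y, hy⟩ := h
  have hy0 : π y = 0 := le_antisymm hy (hπnn y)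
  -- some x with π x > 0
  have hx : ∃ x, 0 < π x := by
    by_contra hx
    push_neg at hx
    have : ∑ x, π x = 0 := Finset.sum_eq_zero fun x _ => le_antisymm (hx x) (hπnn x)
    rw [hπsum] at this; norm_num at this
  obtain ⟨x, hxpos⟩ := hx
  obtain ⟨n, hn⟩ := hirr x y
  have h1 : ((Pᵀ ^ n).mulVec π) y = 0 := by
    rw [aux_transpose_pow_mulVec P lam π hπeig n]
    simp [hy0]
  have h2 : ((Pᵀ ^ n).mulVec π) y = ∑ z, (P ^ n) z y * π z := by
    rw [Matrix.mulVec]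
    simp only [dotProduct]
    refine Finset.sum_congr rfl fun z _ => ?_
    rw [← Matrix.transpose_pow, Matrix.transpose_apply]
  have h3 : ∀ z, (P ^ n) z y * π z = 0 := by
    intro z
    have hterm : ∀ z ∈ Finset.univ, 0 ≤ (P ^ n) z y * π z :=
      fun z _ => mul_nonneg (aux_pow_nonneg P hnn n z y) (hπnn z)
    have := (Finset.sum_eq_zero_iff_of_nonneg hterm).1 (h2 ▸ h1) z (Finset.mem_univ z)
    exact this
  have := h3 x
  nlinarith [hn, hxpos]

lemma aux_pow_mulVec (P : Matrix D D ℝ) (r : ℝ) (u : D → ℝ)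
    (h : P.mulVec u = r • u) : ∀ n, (P ^ n).mulVec u = (r ^ n) • u := by
  intro n
  induction n with
  | zero => simp
  | succ n ih =>
    rw [pow_succ', ← Matrix.mulVec_mulVec, ih, Matrix.mulVec_smul, h, smul_smul, pow_succ',
      mul_comm]

lemma aux_perron_simple [Nonempty D] (P : Matrix D D ℝ)
    (hnn : ∀ x y, 0 ≤ P x y) (hirr : MatIrreducible P)
    (lam : ℝ) (h1l : 0 ≤ 1 - lam)
    (π : D → ℝ) (hπpos : ∀ x, 0 < π x)
    (hπeig : Pᵀ.mulVec π = (1 - lam) • π)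
    (w : D → ℂ) (hw : w ≠ 0)
    (heig : (P.map Complex.ofReal).mulVec w = ((1 - lam : ℝ) : ℂ) • w)
    (horth : ∑ x, (π x : ℂ) * w x = 0) : False := by
  rcases subsingleton_or_nontrivial D with hsub | hnontriv
  · -- one-point case
    obtain ⟨d⟩ := ‹Nonempty D›
    have huniv : (Finset.univ : Finset D) = {d} := by
      apply Finset.eq_singleton_iff_unique_mem.2
      exact ⟨Finset.mem_univ d, fun x _ => Subsingleton.elim x d⟩
    rw [huniv, Finset.sum_singleton] at horth
    have hwd : w d = 0 := by
      rcases mul_eq_zero.1 horth with h | h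
      · exact absurd (Complex.ofReal_eq_zero.1 h) (hπpos d).ne'
      · exact h
    exact hw (funext fun x => by rw [Subsingleton.elim x d]; exact hwd)
  -- eigen equation componentwise
  have heig' : ∀ x, ∑ y, (P x y : ℂ) * w y = ((1 - lam : ℝ) : ℂ) * w x := by
    intro x
    have := congrFun heig x
    simpa [Matrix.mulVec, dotProduct, Matrix.map_apply] using this
  set u : D → ℝ := fun x => ‖w x‖ with hu
  have hunn : ∀ x, 0 ≤ u x := fun x => norm_nonneg _
  -- step1
  have step1 : ∀ x, (1 - lam) * u x ≤ ∑ y, P x y * u y := by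
    intro x
    have h1 : ‖∑ y, (P x y : ℂ) * w y‖ ≤ ∑ y, P x y * u y := by
      refine (norm_sum_le _ _).trans_eq ?_
      refine Finset.sum_congr rfl fun y _ => ?_
      rw [norm_mul, Complex.norm_real, Real.norm_eq_abs, abs_of_nonneg (hnn x y)]
    rw [heig'] at h1
    rw [norm_mul, Complex.norm_real, Real.norm_eq_abs, abs_of_nonneg h1l] at h1
    exact h1
  -- step2
  have key : ∑ x, π x * ((∑ y, P x y * u y) - (1 - lam) * u x) = 0 := by
    have e1 : ∑ x, π x * ∑ y, P x y * u y = ∑ y, (1 - lam) * π y * u y := by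
      calc ∑ x, π x * ∑ y, P x y * u y = ∑ x, ∑ y, π x * (P x y * u y) := by
            refine Finset.sum_congr rfl fun x _ => Finset.mul_sum _ _ _
      _ = ∑ y, ∑ x, π x * (P x y * u y) := Finset.sum_comm
      _ = ∑ y, (∑ x, P x y * π x) * u y := by
            refine Finset.sum_congr rfl fun y _ => ?_
            rw [Finset.sum_mul]
            refine Finset.sum_congr rfl fun x _ => by ring
      _ = ∑ y, (1 - lam) * π y * u y := by
            refine Finset.sum_congr rfl fun y _ => ?_
            have := congrFun hπeig y
            simp only [Matrix.mulVec, dotProduct, Matrix.transpose_apply,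
              Pi.smul_apply, smul_eq_mul] at this
            rw [this]
    rw [Finset.sum_congr rfl fun x (_ : x ∈ Finset.univ) => mul_sub (π x) _ _]
    rw [Finset.sum_sub_distrib, e1]
    rw [sub_eq_zero]
    refine Finset.sum_congr rfl fun x _ => by ring
  have step2 : ∀ x, ∑ y, P x y * u y = (1 - lam) * u x := by
    intro x
    have hterm : ∀ z ∈ Finset.univ, (0:ℝ) ≤ π z * ((∑ y, P z y * u y) - (1 - lam) * u z) :=
      fun z _ => mul_nonneg (hπpos z).le (by linarith [step1 z])
    have := (Finset.sum_eq_zero_iff_of_nonneg hterm).1 key x (Finset.mem_univ x)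
    have hπx := (hπpos x).ne'
    have h2 : (∑ y, P x y * u y) - (1 - lam) * u x = 0 := by
      rcases mul_eq_zero.1 this with h | h
      · exact absurd h hπx
      · exact h
    linarith
  have hPu : P.mulVec u = (1 - lam) • u := by
    funext x
    simp only [Matrix.mulVec, dotProduct, Pi.smul_apply, smul_eq_mul]
    exact step2 x
  -- u positive
  have hx0 : ∃ x0, w x0 ≠ 0 := by
    by_contra h
    push_neg at h
    exact hw (funext fun x => h x)
  obtain ⟨x0, hx0⟩ := hx0
  have hux0 : 0 < u x0 := by
    simp only [hu]
    exact norm_pos_iff.mpr hx0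
  have upos : ∀ x, 0 < u x := by
    intro x
    rcases (hunn x).lt_or_eq with h | h
    · exact h
    obtain ⟨n, hn⟩ := hirr x x0
    have h1 : ((P ^ n).mulVec u) x = 0 := by
      rw [aux_pow_mulVec P _ u hPu n]
      simp [← h]
    have h2 : ∀ z ∈ Finset.univ, (0:ℝ) ≤ (P ^ n) x z * u z :=
      fun z _ => mul_nonneg (aux_pow_nonneg P hnn n x z) (hunn z)
    have h3 : ∑ z, (P ^ n) x z * u z = 0 := by
      have := h1
      simpa [Matrix.mulVec, dotProduct] using this
    have := (Finset.sum_eq_zero_iff_of_nonneg h2).1 h3 x0 (Finset.mem_univ x0)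
    nlinarith [hn, hux0]
  -- 1 - lam > 0
  have hpos1l : 0 < 1 - lam := by
    rcases h1l.lt_or_eq with h | h
    · exact h
    exfalso
    have hP0 : ∀ x y, P x y = 0 := by
      intro x y
      have h1 : ∑ z, P x z * u z = 0 := by rw [step2 x, ← h]; ring
      have h2 : ∀ z ∈ Finset.univ, (0:ℝ) ≤ P x z * u z :=
        fun z _ => mul_nonneg (hnn x z) (hunn z)
      have := (Finset.sum_eq_zero_iff_of_nonneg h2).1 h1 y (Finset.mem_univ y)
      rcases mul_eq_zero.1 this with h' | h'
      · exact h'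
      · exact absurd h' (upos y).ne'
    obtain ⟨a, b, hab⟩ := exists_pair_ne D
    obtain ⟨n, hn⟩ := hirr a b
    rcases n with _ | m
    · simp only [pow_zero, Matrix.one_apply_ne hab] at hn
      exact lt_irrefl _ hn
    · have : (P ^ (m + 1)) a b = 0 := by
        rw [pow_succ, Matrix.mul_apply]
        refine Finset.sum_eq_zero fun z _ => ?_
        rw [hP0 z b, mul_zero]
      rw [this] at hn
      exact lt_irrefl _ hn
  -- phases
  set c : D → ℂ := fun x => w x / (u x : ℂ) with hc
  have hune : ∀ x, ((u x : ℝ) : ℂ) ≠ 0 := fun x => by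
    exact_mod_cast Complex.ofReal_ne_zero.2 (upos x).ne'
  have hcu : ∀ x, w x = c x * (u x : ℂ) := fun x => by
    rw [hc]
    exact (div_mul_cancel₀ (w x) (hune x)).symm
  have habsc : ∀ x, ‖c x‖ = 1 := by
    intro x
    rw [hc]
    simp only [norm_div, Complex.norm_real, Real.norm_eq_abs, abs_of_nonneg (hunn x)]
    rw [div_eq_one_iff_eq (upos x).ne']
  have hcne : ∀ x, c x ≠ 0 := fun x => by
    intro h; have := habsc x; rw [h] at this; simp at this
  -- step6
  have step6 : ∀ x y, 0 < P x y → c y = c x := by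
    intro x y hPxy
    -- S = 0
    have hS : ∑ z, (P x z : ℂ) * (u z : ℂ) * (c x - c z) = 0 := by
      have e1 : ∑ z, (P x z : ℂ) * w z = ((1 - lam : ℝ) : ℂ) * w x := heig' x
      have e2 : ((1 - lam : ℝ) : ℂ) * w x = ((∑ z, P x z * u z : ℝ) : ℂ) * c x := by
        rw [step2 x, hcu x]
        push_cast
        ring
      have e3 : ((∑ z, P x z * u z : ℝ) : ℂ) * c x = ∑ z, (P x z : ℂ) * (u z : ℂ) * c x := by
        push_cast
        rw [Finset.sum_mul]
      calc ∑ z, (P x z : ℂ) * (u z : ℂ) * (c x - c z)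
          = (∑ z, (P x z : ℂ) * (u z : ℂ) * c x) - ∑ z, (P x z : ℂ) * (u z : ℂ) * c z := by
            rw [← Finset.sum_sub_distrib]
            refine Finset.sum_congr rfl fun z _ => by ring
      _ = (∑ z, (P x z : ℂ) * (u z : ℂ) * c x) - ∑ z, (P x z : ℂ) * w z := by
            rw [sub_right_inj]
            refine Finset.sum_congr rfl fun z _ => by rw [hcu z]; ring
      _ = 0 := by rw [e1, e2, e3, sub_self]
    -- real part inequality
    have hT : ∑ z, P x z * u z * (1 - ((starRingEnd ℂ) (c x) * c z).re) = 0 := by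
      have h0 : ((starRingEnd ℂ) (c x) * ∑ z, (P x z : ℂ) * (u z : ℂ) * (c x - c z)).re = 0 := by
        rw [hS, mul_zero, Complex.zero_re]
      rw [Finset.mul_sum] at h0
      rw [Complex.re_sum] at h0
      rw [← h0]
      refine Finset.sum_congr rfl fun z _ => ?_
      have hcc : (starRingEnd ℂ) (c x) * c x = ((1:ℝ):ℂ) := by
        rw [← Complex.normSq_eq_conj_mul_self, ← Complex.sq_norm, habsc x]
        norm_num
      have : (starRingEnd ℂ) (c x) * ((P x z : ℂ) * (u z : ℂ) * (c x - c z))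
          = (P x z : ℂ) * (u z : ℂ) * (((1:ℝ):ℂ) - (starRingEnd ℂ) (c x) * c z) := by
        rw [← hcc]; ring
      rw [this]
      simp only [Complex.mul_re, Complex.sub_re, Complex.mul_im, Complex.ofReal_re,
        Complex.ofReal_im, Complex.one_re, Complex.one_im]
      ring
    have hterm : ∀ z ∈ Finset.univ,
        (0:ℝ) ≤ P x z * u z * (1 - ((starRingEnd ℂ) (c x) * c z).re) := by
      intro z _
      refine mul_nonneg (mul_nonneg (hnn x z) (hunn z)) ?_
      have h1 : ((starRingEnd ℂ) (c x) * c z).re ≤ ‖(starRingEnd ℂ) (c x) * c z‖ :=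
        Complex.re_le_norm _
      have h2 : ‖(starRingEnd ℂ) (c x) * c z‖ = 1 := by
        rw [norm_mul, Complex.norm_conj, habsc, habsc, mul_one]
      linarith
    have hzero := (Finset.sum_eq_zero_iff_of_nonneg hterm).1 hT y (Finset.mem_univ y)
    have hre1 : ((starRingEnd ℂ) (c x) * c y).re = 1 := by
      have hne : P x y * u y ≠ 0 := (mul_pos hPxy (upos y)).ne'
      rcases mul_eq_zero.1 hzero with h | h
      · exact absurd h hne
      · linarith
    -- conclude c y = c x
    set z := (starRingEnd ℂ) (c x) * c y with hz
    have habsz : ‖z‖ = 1 := by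
      rw [hz, norm_mul, Complex.norm_conj, habsc, habsc, mul_one]
    have hzim : z.im = 0 := by
      have h := Complex.sq_norm z
      rw [habsz, one_pow, Complex.normSq_apply] at h
      rw [hre1] at h
      have him : z.im * z.im = 0 := by linarith
      exact mul_self_eq_zero.mp him
    have hz1 : z = 1 := by
      apply Complex.ext
      · rw [hre1]; rfl
      · rw [hzim]; rfl
    have : c x * z = c x * 1 := by rw [hz1]
    rw [hz, ← mul_assoc, Complex.mul_conj, mul_one] at this
    rw [Complex.normSq_eq_norm_sq, habsc] at this
    simpa using this
  -- step7
  have step7 : ∀ n x y, 0 < (P ^ n) x y → c y = c x := by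
    intro n
    induction n with
    | zero =>
      intro x y h
      by_cases hxy : x = y
      · rw [hxy]
      · rw [pow_zero, Matrix.one_apply_ne hxy] at h
        exact absurd h (lt_irrefl 0)
    | succ n ih =>
      intro x y h
      rw [pow_succ, Matrix.mul_apply] at h
      have : ∃ z, 0 < (P ^ n) x z * P z y := by
        by_contra hno
        push_neg at hno
        have : ∑ z, (P ^ n) x z * P z y ≤ 0 := Finset.sum_nonpos fun z _ => hno z
        linarith
      obtain ⟨z, hzpos⟩ := this
      have h1 : 0 < (P ^ n) x z := by
        rcases (aux_pow_nonneg P hnn n x z).lt_or_eq with h' | h'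
        · exact h'
        · rw [← h'] at hzpos; simp at hzpos
      have h2 : 0 < P z y := by
        rcases (hnn z y).lt_or_eq with h' | h'
        · exact h'
        · rw [← h'] at hzpos; simp at hzpos
      rw [step6 z y h2, ih x z h1]
  -- conclude
  obtain ⟨d⟩ := ‹Nonempty D›
  have hcall : ∀ x, c x = c d := by
    intro x
    obtain ⟨n, hn⟩ := hirr d x
    exact step7 n d x hn
  have hfinal : ∑ x, (π x : ℂ) * w x = c d * ((∑ x, π x * u x : ℝ) : ℂ) := by
    push_cast
    rw [Finset.mul_sum]
    refine Finset.sum_congr rfl fun x _ => ?_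
    rw [hcu x, hcall x]
    ring
  rw [horth] at hfinal
  have hsumpos : 0 < ∑ x, π x * u x :=
    Finset.sum_pos (fun x _ => mul_pos (hπpos x) (upos x)) Finset.univ_nonempty
  have := hfinal.symm
  rcases mul_eq_zero.1 this with h | h
  · exact hcne d h
  · rw [Complex.ofReal_eq_zero] at h
    exact hsumpos.ne' h



noncomputable def auxMulVecCLM (v : D → ℂ) : Matrix D D ℂ →L[ℂ] (D → ℂ) :=
  LinearMap.toContinuousLinearMap
    { toFun := fun M : Matrix D D ℂ => M.mulVec v
      map_add' := fun A B => Matrix.add_mulVec A B v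
      map_smul' := fun c A => Matrix.smul_mulVec c A v }

lemma auxMulVecCLM_apply (v : D → ℂ) (M : Matrix D D ℂ) :
    auxMulVecCLM v M = M.mulVec v := rfl

lemma aux_exp_mulVec (M : Matrix D D ℂ) (v : D → ℂ) :
    (NormedSpace.exp M).mulVec v
      = ∑' n : ℕ, ((n.factorial : ℂ)⁻¹) • ((M ^ n).mulVec v) := by
  have h1 : (NormedSpace.exp M).mulVec v
      = auxMulVecCLM v (∑' n : ℕ, ((n.factorial : ℂ)⁻¹) • M ^ n) := by
    rw [NormedSpace.exp_eq_tsum ℂ]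
    rfl
  rw [h1, (auxMulVecCLM v).map_tsum (NormedSpace.expSeries_summable' (𝕂 := ℂ) M)]
  refine tsum_congr fun n => ?_
  rw [_root_.map_smul, auxMulVecCLM_apply]

lemma aux_exp_eq_of_pow_eq (M M' : Matrix D D ℂ) (v : D → ℂ)
    (h : ∀ n : ℕ, (M ^ n).mulVec v = (M' ^ n).mulVec v) :
    (NormedSpace.exp M).mulVec v = (NormedSpace.exp M').mulVec v := by
  rw [aux_exp_mulVec, aux_exp_mulVec]
  exact tsum_congr fun n => by rw [h n]

lemma aux_exp_trunc (N : Matrix D D ℂ) (k : ℕ) (w : D → ℂ)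
    (hw : (N ^ k).mulVec w = 0) (c : ℂ) :
    (NormedSpace.exp (c • N)).mulVec w
      = ∑ j ∈ Finset.range k, ((j.factorial : ℂ)⁻¹ * c ^ j) • ((N ^ j).mulVec w) := by
  rw [aux_exp_mulVec]
  rw [tsum_eq_sum (s := Finset.range k) (f := fun n : ℕ =>
      ((n.factorial : ℂ)⁻¹) • (((c • N) ^ n).mulVec w)) ?_]
  · refine Finset.sum_congr rfl fun j _ => ?_
    rw [smul_pow, Matrix.smul_mulVec, smul_smul]
  · intro n hn
    rw [Finset.mem_range, not_lt] at hn
    have hNn : (N ^ n).mulVec w = 0 := by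
      have : N ^ n = N ^ (n - k) * N ^ k := by
        rw [← pow_add]
        congr 1
        omega
      rw [this, ← Matrix.mulVec_mulVec, hw, Matrix.mulVec_zero]
    show ((n.factorial : ℂ))⁻¹ • ((c • N) ^ n).mulVec w = 0
    rw [smul_pow, Matrix.smul_mulVec, hNn, smul_zero, smul_zero]

lemma aux_exp_smul_one (cc : ℂ) :
    NormedSpace.exp (cc • (1 : Matrix D D ℂ)) = Complex.exp cc • (1 : Matrix D D ℂ) := by
  erw [← Algebra.algebraMap_eq_smul_one, ← NormedSpace.algebraMap_exp_comm,
    Complex.exp_eq_exp_ℂ, Algebra.algebraMap_eq_smul_one]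

lemma aux_gen_bound (Pc : Matrix D D ℂ) (μ : ℂ) (k : ℕ) (w : D → ℂ)
    (hw : (((Pc - μ • 1) : Matrix D D ℂ) ^ k).mulVec w = 0)
    (δ : ℝ) (hδ : 0 < δ) (ρ : ℝ) (hμ : μ.re ≤ ρ) :
    ∃ C : ℝ, 0 ≤ C ∧ ∀ t : ℝ, 0 ≤ t →
      ‖(NormedSpace.exp ((t : ℂ) • (Pc - 1))).mulVec w‖
        ≤ C * Real.exp (t * (ρ - 1 + δ)) := by
  set N : Matrix D D ℂ := Pc - μ • 1 with hN
  refine ⟨∑ j ∈ Finset.range k, δ ^ (-(j:ℤ)) * ‖(N ^ j).mulVec w‖, ?_, ?_⟩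
  · exact Finset.sum_nonneg fun j _ => mul_nonneg (zpow_nonneg hδ.le _) (norm_nonneg _)
  intro t ht
  have hsplit : (t : ℂ) • (Pc - 1) = (t : ℂ) • N + ((t : ℂ) * (μ - 1)) • (1 : Matrix D D ℂ) := by
    rw [hN]
    module
  have hcomm : Commute ((t : ℂ) • N) (((t : ℂ) * (μ - 1)) • (1 : Matrix D D ℂ)) :=
    ((Commute.one_right ((t:ℂ) • N)).smul_right _)
  rw [hsplit, Matrix.exp_add_of_commute _ _ hcomm, aux_exp_smul_one,
    Matrix.mul_smul, Matrix.mul_one, Matrix.smul_mulVec]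
  rw [norm_smul]
  have habs : ‖Complex.exp ((t : ℂ) * (μ - 1))‖ = Real.exp (t * (μ.re - 1)) := by
    rw [Complex.norm_exp]
    congr 1
    simp [Complex.mul_re, Complex.sub_re, Complex.sub_im]
  rw [habs]
  have hb : ‖(NormedSpace.exp ((t:ℂ) • N)).mulVec w‖
      ≤ (∑ j ∈ Finset.range k, δ ^ (-(j:ℤ)) * ‖(N ^ j).mulVec w‖) * Real.exp (t * δ) := by
    rw [aux_exp_trunc N k w hw]
    refine (norm_sum_le _ _).trans ?_
    rw [Finset.sum_mul]
    refine Finset.sum_le_sum fun j _ => ?_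
    rw [norm_smul]
    have h1 : ‖((j.factorial : ℂ)⁻¹ * (t:ℂ) ^ j)‖ = t ^ j / j.factorial := by
      rw [_root_.norm_mul, norm_inv, norm_pow, Complex.norm_real]
      simp [Real.norm_eq_abs, abs_of_nonneg ht, Complex.norm_natCast]
      ring
    rw [h1]
    have h2 : t ^ j / j.factorial ≤ δ ^ (-(j:ℤ)) * Real.exp (t * δ) := by
      have h3 : (δ * t) ^ j / j.factorial ≤ Real.exp (δ * t) :=
        Real.pow_div_factorial_le_exp _ (mul_nonneg hδ.le ht) j
      rw [mul_pow] at h3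
      rw [_root_.zpow_neg, zpow_natCast]
      rw [mul_comm t δ]
      rw [inv_mul_eq_div, le_div_iff₀ (pow_pos hδ j)]
      calc t ^ j / j.factorial * δ ^ j = δ ^ j * t ^ j / j.factorial := by ring
      _ ≤ Real.exp (δ * t) := h3
    calc t ^ j / j.factorial * ‖(N ^ j).mulVec w‖
        ≤ (δ ^ (-(j:ℤ)) * Real.exp (t * δ)) * ‖(N ^ j).mulVec w‖ := by
          exact mul_le_mul_of_nonneg_right h2 (norm_nonneg _)
    _ = δ ^ (-(j:ℤ)) * ‖(N ^ j).mulVec w‖ * Real.exp (t * δ) := by ring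
  calc Real.exp (t * (μ.re - 1)) * ‖(NormedSpace.exp ((t:ℂ) • N)).mulVec w‖
      ≤ Real.exp (t * (μ.re - 1)) *
        ((∑ j ∈ Finset.range k, δ ^ (-(j:ℤ)) * ‖(N ^ j).mulVec w‖) * Real.exp (t * δ)) :=
        mul_le_mul_of_nonneg_left hb (Real.exp_nonneg _)
  _ = (∑ j ∈ Finset.range k, δ ^ (-(j:ℤ)) * ‖(N ^ j).mulVec w‖)
        * Real.exp (t * (μ.re - 1 + δ)) := by
      rw [show t * (μ.re - 1 + δ) = t * (μ.re - 1) + t * δ by ring, Real.exp_add]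
      ring
  _ ≤ (∑ j ∈ Finset.range k, δ ^ (-(j:ℤ)) * ‖(N ^ j).mulVec w‖)
        * Real.exp (t * (ρ - 1 + δ)) := by
      refine mul_le_mul_of_nonneg_left ?_
        (Finset.sum_nonneg fun j _ => mul_nonneg (zpow_nonneg hδ.le _) (norm_nonneg _))
      exact Real.exp_le_exp.2 (by nlinarith)


noncomputable def auxPhi (π : D → ℝ) : (D → ℂ) →ₗ[ℂ] ℂ where
  toFun g := ∑ x, (π x : ℂ) * g x
  map_add' g h := by
    simp only [Pi.add_apply, mul_add]
    rw [Finset.sum_add_distrib]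
  map_smul' c g := by
    simp only [Pi.smul_apply, smul_eq_mul, RingHom.id_apply]
    rw [Finset.mul_sum]
    refine Finset.sum_congr rfl fun x _ => by ring

lemma aux_phi_decay (Pc : Matrix D D ℂ) (π : D → ℝ)
    (hinv : ∀ g : D → ℂ, ∑ x, (π x : ℂ) * g x = 0 →
      ∑ x, (π x : ℂ) * (Pc.mulVec g) x = 0)
    (ρ δ : ℝ) (hδ : 0 < δ)
    (heigbound : ∀ μ : ℂ, (∃ g : D → ℂ, g ≠ 0 ∧ Pc.mulVec g = μ • g ∧
      ∑ x, (π x : ℂ) * g x = 0) → μ.re ≤ ρ)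
    (v : D → ℂ) (hv : ∑ x, (π x : ℂ) * v x = 0) :
    ∃ C : ℝ, 0 ≤ C ∧ ∀ t : ℝ, 0 ≤ t →
      ‖(NormedSpace.exp ((t : ℂ) • (Pc - 1))).mulVec v‖
        ≤ C * Real.exp (t * (ρ - 1 + δ)) := by
  classical
  set φ := auxPhi π with hφ
  set V : Submodule ℂ (D → ℂ) := LinearMap.ker φ with hV
  have hmemV : ∀ g : D → ℂ, g ∈ V ↔ ∑ x, (π x : ℂ) * g x = 0 := fun g => Iff.rfl
  set L : Module.End ℂ (D → ℂ) := Matrix.toLinAlgEquiv' Pc with hL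
  have hmap : ∀ g ∈ V, L g ∈ V := by
    intro g hg
    rw [hmemV] at hg ⊢
    rw [hL, Matrix.toLinAlgEquiv'_apply]
    exact hinv g hg
  set A : Module.End ℂ V := L.restrict hmap with hA
  have hcoe : ∀ (m : ℕ) (μ : ℂ) (y : V),
      ((((A - μ • 1) ^ m) y : V) : D → ℂ) = ((L - μ • 1) ^ m) (y : D → ℂ) := by
    intro m μ
    induction m with
    | zero => intro y; simp
    | succ m ih =>
      intro y
      rw [pow_succ, pow_succ, Module.End.mul_apply, Module.End.mul_apply]
      have hstep : (((A - μ • 1) y : V) : D → ℂ) = (L - μ • 1) (y : D → ℂ) := by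
        simp only [LinearMap.sub_apply, Submodule.coe_sub, LinearMap.smul_apply,
          Module.End.one_apply, SetLike.val_smul]
        rfl
      rw [← hstep, ih]
  -- ambient matrix identity for (L - μ•1)^m
  have hmat : ∀ (m : ℕ) (μ : ℂ) (g : D → ℂ),
      ((L - μ • 1) ^ m) g = (((Pc - μ • 1) : Matrix D D ℂ) ^ m).mulVec g := by
    intro m μ g
    have h1 : L - μ • 1 = Matrix.toLinAlgEquiv' ((Pc - μ • 1 : Matrix D D ℂ)) := by
      rw [map_sub, hL]
      congr 1
      rw [_root_.map_smul, _root_.map_one]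
    rw [h1, ← map_pow, Matrix.toLinAlgEquiv'_apply]
  -- the element as member of V
  have hvV : v ∈ V := (hmemV v).2 hv
  -- property to be proved by induction over generalized eigenspaces
  set Q : V → Prop := fun z => ∃ C : ℝ, 0 ≤ C ∧ ∀ t : ℝ, 0 ≤ t →
      ‖(NormedSpace.exp ((t : ℂ) • (Pc - 1))).mulVec (z : D → ℂ)‖
        ≤ C * Real.exp (t * (ρ - 1 + δ)) with hQ
  have htop : (⟨v, hvV⟩ : V) ∈ ⨆ μ : ℂ, A.maxGenEigenspace μ := by
    rw [Module.End.iSup_maxGenEigenspace_eq_top]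
    trivial
  have hQv : Q ⟨v, hvV⟩ := by
    refine Submodule.iSup_induction (motive := Q) (fun μ : ℂ => A.maxGenEigenspace μ) htop ?_ ?_ ?_
    · -- generators
      intro μ z hz
      obtain ⟨k, hk⟩ := (Module.End.mem_maxGenEigenspace A μ z).1 hz
      have hker : (((Pc - μ • 1) : Matrix D D ℂ) ^ k).mulVec (z : D → ℂ) = 0 := by
        rw [← hmat k μ, ← hcoe k μ z, hk, Submodule.coe_zero]
      by_cases hz0 : z = 0
      · refine ⟨0, le_refl 0, fun t ht => ?_⟩
        rw [hz0]
        simp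
      -- μ is an eigenvalue of A with eigenvector in V
      have hμρ : μ.re ≤ ρ := by
        have hgen : A.HasGenEigenvalue μ k := by
          rw [Module.End.HasGenEigenvalue]
          rw [Module.End.HasUnifEigenvalue]
          intro hbot
          have : z ∈ (⊥ : Submodule ℂ V) := by
            rw [← hbot]
            rw [Module.End.mem_genEigenspace_nat, LinearMap.mem_ker]
            exact hk
          exact hz0 (Submodule.mem_bot ℂ |>.1 this)
        have heigval := Module.End.hasEigenvalue_of_hasGenEigenvalue hgen
        obtain ⟨g, hg⟩ := heigval.exists_hasEigenvector
        have hgeq : A g = μ • g := Module.End.mem_eigenspace_iff.1 hg.1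
        refine heigbound μ ⟨(g : D → ℂ), ?_, ?_, ?_⟩
        · intro h
          exact hg.2 (Subtype.ext h)
        · have : ((A g : V) : D → ℂ) = ((μ • g : V) : D → ℂ) := by rw [hgeq]
          rw [Submodule.coe_smul] at this
          have hAg : ((A g : V) : D → ℂ) = L (g : D → ℂ) := rfl
          rw [hAg] at this
          rw [hL, Matrix.toLinAlgEquiv'_apply] at this
          exact this
        · exact (hmemV _).1 g.2
      exact aux_gen_bound Pc μ k (z : D → ℂ) hker δ hδ ρ hμρ
    · -- zero
      refine ⟨0, le_refl 0, fun t ht => ?_⟩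
      simp
    · -- add
      rintro z1 z2 ⟨C1, hC1, hb1⟩ ⟨C2, hC2, hb2⟩
      refine ⟨C1 + C2, by linarith, fun t ht => ?_⟩
      rw [Submodule.coe_add, Matrix.mulVec_add]
      calc ‖(NormedSpace.exp ((t : ℂ) • (Pc - 1))).mulVec (z1 : D → ℂ)
            + (NormedSpace.exp ((t : ℂ) • (Pc - 1))).mulVec (z2 : D → ℂ)‖
          ≤ ‖(NormedSpace.exp ((t : ℂ) • (Pc - 1))).mulVec (z1 : D → ℂ)‖
            + ‖(NormedSpace.exp ((t : ℂ) • (Pc - 1))).mulVec (z2 : D → ℂ)‖ :=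
            norm_add_le _ _
      _ ≤ C1 * Real.exp (t * (ρ - 1 + δ)) + C2 * Real.exp (t * (ρ - 1 + δ)) :=
            add_le_add (hb1 t ht) (hb2 t ht)
      _ = (C1 + C2) * Real.exp (t * (ρ - 1 + δ)) := by ring
  exact hQv

lemma aux_uniform (Pc : Matrix D D ℂ) (π : D → ℝ)
    (hinv : ∀ g : D → ℂ, ∑ x, (π x : ℂ) * g x = 0 →
      ∑ x, (π x : ℂ) * (Pc.mulVec g) x = 0)
    (ρ δ : ℝ) (hδ : 0 < δ)
    (heigbound : ∀ μ : ℂ, (∃ g : D → ℂ, g ≠ 0 ∧ Pc.mulVec g = μ • g ∧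
      ∑ x, (π x : ℂ) * g x = 0) → μ.re ≤ ρ) :
    ∃ C : ℝ, 0 ≤ C ∧ ∀ v : D → ℂ, (∑ x, (π x : ℂ) * v x = 0) → ∀ t : ℝ, 0 ≤ t →
      ‖(NormedSpace.exp ((t : ℂ) • (Pc - 1))).mulVec v‖
        ≤ C * ‖v‖ * Real.exp (t * (ρ - 1 + δ)) := by
  classical
  set φ := auxPhi π with hφ
  set V : Submodule ℂ (D → ℂ) := LinearMap.ker φ with hV
  have hmem : ∀ g : D → ℂ, g ∈ V → ∑ x, (π x : ℂ) * g x = 0 :=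
    fun g hg => LinearMap.mem_ker.mp hg
  set b := Module.finBasis ℂ V with hb
  choose Cf hCf0 hCfb using fun i =>
    aux_phi_decay Pc π hinv ρ δ hδ heigbound ((b i : D → ℂ)) (hmem _ (b i).2)
  have hKnn : ∀ i, (0:ℝ) ≤ ‖LinearMap.toContinuousLinearMap (b.coord i)‖ :=
    fun i => ContinuousLinearMap.opNorm_nonneg _
  refine ⟨∑ i, ‖LinearMap.toContinuousLinearMap (b.coord i)‖ * Cf i, Finset.sum_nonneg fun i _ =>
    mul_nonneg (hKnn i) (hCf0 i), ?_⟩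
  intro v hv t ht
  have hvV : v ∈ V := LinearMap.mem_ker.mpr hv
  set z : V := ⟨v, hvV⟩ with hz
  have hrepr : v = ∑ i, b.repr z i • ((b i : D → ℂ)) := by
    have h1 := b.sum_repr z
    have h2 := congrArg (V.subtype) h1
    rw [map_sum] at h2
    simp only [Submodule.coe_subtype, _root_.map_smul] at h2
    exact h2.symm
  set E := NormedSpace.exp ((t : ℂ) • (Pc - 1)) with hE
  have hlin : E.mulVec v = ∑ i, b.repr z i • E.mulVec ((b i : D → ℂ)) := by
    conv_lhs => rw [hrepr]
    rw [← Matrix.mulVecLin_apply, map_sum]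
    refine Finset.sum_congr rfl fun i _ => ?_
    rw [_root_.map_smul, Matrix.mulVecLin_apply]
  rw [hlin]
  have hcoord : ∀ i, ‖b.repr z i‖ ≤ ‖LinearMap.toContinuousLinearMap (b.coord i)‖ * ‖v‖ := by
    intro i
    have h1 : b.repr z i = (LinearMap.toContinuousLinearMap (b.coord i)) z := rfl
    rw [h1]
    have h2 := (LinearMap.toContinuousLinearMap (b.coord i)).le_opNorm z
    have h3 : ‖z‖ = ‖v‖ := rfl
    rw [h3] at h2
    exact h2
  calc ‖∑ i, b.repr z i • E.mulVec ((b i : D → ℂ))‖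
      ≤ ∑ i, ‖b.repr z i • E.mulVec ((b i : D → ℂ))‖ := norm_sum_le _ _
  _ ≤ ∑ i, (‖LinearMap.toContinuousLinearMap (b.coord i)‖ * ‖v‖) * (Cf i * Real.exp (t * (ρ - 1 + δ))) := by
      refine Finset.sum_le_sum fun i _ => ?_
      rw [norm_smul]
      exact mul_le_mul (hcoord i) (hCfb i t ht) (norm_nonneg _)
        (mul_nonneg (hKnn i) (norm_nonneg _))
  _ = (∑ i, ‖LinearMap.toContinuousLinearMap (b.coord i)‖ * Cf i) * ‖v‖ * Real.exp (t * (ρ - 1 + δ)) := by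
      rw [Finset.sum_mul, Finset.sum_mul]
      refine Finset.sum_congr rfl fun i _ => by ring

end Aux


theorem pi_return_semigroup_decay_on_C0
    {D : Type*} [Fintype D] [DecidableEq D] [Nonempty D]
    (P : Matrix D D ℝ)
    (hnn : ∀ x y, 0 ≤ P x y)
    (hrow : ∀ x, ∑ y, P x y ≤ 1)
    (hirr : MatIrreducible P)
    (lam : ℝ)
    (hsr_ub : ∀ σ : ℂ, IsEigval (P.map Complex.ofReal) σ → ‖σ‖ ≤ 1 - lam)
    (hsr_attained : ∃ σ : ℂ, IsEigval (P.map Complex.ofReal) σ ∧ ‖σ‖ = 1 - lam)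
    (π : D → ℝ)
    (hπnn : ∀ x, 0 ≤ π x) (hπsum : ∑ x, π x = 1)
    (hπeig : Pᵀ.mulVec π = (1 - lam) • π)
    (γ : ℝ) (hγpos : 0 < γ)
    (hgap_ub : ∀ σ : ℂ, IsEigval (P.map Complex.ofReal) σ → σ ≠ ((1 - lam : ℝ) : ℂ) →
      σ.re ≤ 1 - lam - γ)
    (hgap_attained : ∃ σ : ℂ, IsEigval (P.map Complex.ofReal) σ ∧ σ ≠ ((1 - lam : ℝ) : ℂ) ∧
      σ.re = 1 - lam - γ)
    (δ : ℝ) (hδ : 0 < δ)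
    (nrm : Seminorm ℝ (D → ℝ)) (hnrm : ∀ g : D → ℝ, nrm g = 0 → g = 0) :
    ∃ C : ℝ, ∀ f : D → ℝ, (∑ x, π x * f x = 0) → ∀ t : ℝ, 0 ≤ t → ∀ x : D,
      |(NormedSpace.exp
          (t • ((Matrix.of fun x y => P x y + (1 - ∑ z, P x z) * π y) - 1))).mulVec f x|
        ≤ C * Real.exp (-t * (lam + γ - δ)) * nrm f := by
  classical
  have hπpos := aux_pi_pos P hnn hirr lam π hπnn hπsum hπeig
  have h1l : 0 ≤ 1 - lam := by
    obtain ⟨σ, _, hσ⟩ := hsr_attained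
    have := norm_nonneg σ
    linarith
  set Pc : Matrix D D ℂ := P.map Complex.ofReal with hPc
  have hPc_apply : ∀ x y, Pc x y = (P x y : ℂ) := fun x y => rfl
  -- left eigen equation, complexified, componentwise
  have hπeig' : ∀ y, ∑ x, P x y * π x = (1 - lam) * π y := by
    intro y
    have := congrFun hπeig y
    simpa [Matrix.mulVec, dotProduct, Matrix.transpose_apply] using this
  have hinv : ∀ g : D → ℂ, ∑ x, (π x : ℂ) * g x = 0 →
      ∑ x, (π x : ℂ) * (Pc.mulVec g) x = 0 := by
    intro g hg
    have e1 : ∑ x, (π x : ℂ) * (Pc.mulVec g) x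
        = ∑ y, (((1 - lam) * π y : ℝ) : ℂ) * g y := by
      calc ∑ x, (π x : ℂ) * (Pc.mulVec g) x
          = ∑ x, ∑ y, (π x : ℂ) * ((P x y : ℂ) * g y) := by
            refine Finset.sum_congr rfl fun x _ => ?_
            rw [Matrix.mulVec, dotProduct, Finset.mul_sum]
            exact Finset.sum_congr rfl fun y _ => by rw [hPc_apply]
      _ = ∑ y, ∑ x, (π x : ℂ) * ((P x y : ℂ) * g y) := Finset.sum_comm
      _ = ∑ y, (((∑ x, P x y * π x : ℝ)) : ℂ) * g y := by
            refine Finset.sum_congr rfl fun y _ => ?_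
            push_cast
            rw [Finset.sum_mul]
            refine Finset.sum_congr rfl fun x _ => by ring
      _ = ∑ y, (((1 - lam) * π y : ℝ) : ℂ) * g y := by
            refine Finset.sum_congr rfl fun y _ => by rw [hπeig' y]
    rw [e1]
    have e2 : ∑ y, (((1 - lam) * π y : ℝ) : ℂ) * g y
        = ((1 - lam : ℝ) : ℂ) * ∑ y, (π y : ℂ) * g y := by
      rw [Finset.mul_sum]
      refine Finset.sum_congr rfl fun y _ => by push_cast; ring
    rw [e2, hg, mul_zero]
  have heigbound : ∀ μ : ℂ, (∃ g : D → ℂ, g ≠ 0 ∧ Pc.mulVec g = μ • g ∧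
      ∑ x, (π x : ℂ) * g x = 0) → μ.re ≤ 1 - lam - γ := by
    rintro μ ⟨g, hg0, hgeig, hgorth⟩
    have hev : IsEigval Pc μ := ⟨g, hg0, hgeig⟩
    by_cases hμ : μ = ((1 - lam : ℝ) : ℂ)
    · exfalso
      refine aux_perron_simple P hnn hirr lam h1l π hπpos hπeig g hg0 ?_ hgorth
      rw [← hμ]
      exact hgeig
    · exact hgap_ub μ hev hμ
  obtain ⟨C1, hC10, hC1b⟩ := aux_uniform Pc π hinv (1 - lam - γ) δ hδ heigbound
  obtain ⟨K, hK0, hKb⟩ := aux_norm_equiv nrm hnrm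
  refine ⟨C1 * K, ?_⟩
  intro f hf t ht x
  set Qr : Matrix D D ℝ := Matrix.of (fun x y => P x y + (1 - ∑ z, P x z) * π y) with hQr
  set fc : D → ℂ := fun y => (f y : ℂ) with hfc
  set Ψ : Matrix D D ℝ →ₐ[ℝ] Matrix D D ℂ := (Complex.ofRealAm).mapMatrix with hΨ
  have hΨcont : Continuous Ψ := Ψ.toLinearMap.continuous_of_finiteDimensional
  -- complexification of exponential
  have hstep1 : Ψ (NormedSpace.exp (t • (Qr - 1)))
      = NormedSpace.exp ((t : ℂ) • (Ψ Qr - 1)) := by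
    erw [NormedSpace.map_exp Ψ hΨcont]
    congr 1
    rw [_root_.map_smul, map_sub, _root_.map_one]
    exact (algebraMap_smul ℂ t (Ψ Qr - 1)).symm
  -- entrywise complexification of mulVec
  have hvec : ∀ M : Matrix D D ℝ, ∀ y : D, (((M.mulVec f) y : ℝ) : ℂ) = ((Ψ M).mulVec fc) y := by
    intro M y
    simp only [Matrix.mulVec, dotProduct, hΨ, AlgHom.mapMatrix_apply,
      Matrix.map_apply, hfc, Complex.ofRealAm_coe]
    push_cast
    rfl
  -- the Q-to-P switch on the invariant subspace
  have hfc_orth : ∑ y, (π y : ℂ) * fc y = 0 := by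
    rw [hfc]
    have : ((∑ y, π y * f y : ℝ) : ℂ) = 0 := by rw [hf]; norm_num
    rw [← this]
    push_cast
    rfl
  have hQP : ∀ n : ℕ, ((Ψ Qr - 1) ^ n).mulVec fc = ((Pc - 1) ^ n).mulVec fc
      ∧ ∑ y, (π y : ℂ) * (((Pc - 1) ^ n).mulVec fc) y = 0 := by
    intro n
    induction n with
    | zero => simpa using hfc_orth
    | succ n ih =>
      obtain ⟨ih1, ih2⟩ := ih
      set g : D → ℂ := ((Pc - 1) ^ n).mulVec fc with hg
      have hgP : (Pc - 1).mulVec g = Pc.mulVec g - g := by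
        rw [Matrix.sub_mulVec, Matrix.one_mulVec]
      have horthP : ∑ y, (π y : ℂ) * ((Pc - 1).mulVec g) y = 0 := by
        rw [hgP]
        have : ∑ y, (π y : ℂ) * (Pc.mulVec g - g) y
            = (∑ y, (π y : ℂ) * (Pc.mulVec g) y) - ∑ y, (π y : ℂ) * g y := by
          rw [← Finset.sum_sub_distrib]
          refine Finset.sum_congr rfl fun y _ => by simp [Pi.sub_apply]; ring
        rw [this, hinv g ih2, ih2, sub_zero]
      have hQg : (Ψ Qr - 1).mulVec g = (Pc - 1).mulVec g := by
        have hQmul : (Ψ Qr).mulVec g = Pc.mulVec g := by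
          funext y
          simp only [Matrix.mulVec, dotProduct, hΨ, AlgHom.mapMatrix_apply,
            Matrix.map_apply, hQr, Matrix.of_apply, Complex.ofRealAm_coe]
          push_cast
          have : ∑ z, ((P y z : ℂ) + ((1 : ℂ) - ∑ w, (P y w : ℂ)) * (π z : ℂ)) * g z
              = (∑ z, (P y z : ℂ) * g z)
                + ((1 : ℂ) - ∑ w, (P y w : ℂ)) * ∑ z, (π z : ℂ) * g z := by
            rw [Finset.mul_sum, ← Finset.sum_add_distrib]
            refine Finset.sum_congr rfl fun z _ => by ring
          rw [this, ih2, mul_zero, add_zero]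
          exact Finset.sum_congr rfl fun z _ => by rw [hPc_apply]
        rw [Matrix.sub_mulVec, Matrix.sub_mulVec, hQmul]
      constructor
      · rw [pow_succ', pow_succ', ← Matrix.mulVec_mulVec, ← Matrix.mulVec_mulVec, ih1, ← hg,
          hQg]
      · rw [pow_succ', ← Matrix.mulVec_mulVec, ← hg]
        exact horthP
  have hswitch : (NormedSpace.exp ((t : ℂ) • (Ψ Qr - 1))).mulVec fc
      = (NormedSpace.exp ((t : ℂ) • (Pc - 1))).mulVec fc := by
    refine aux_exp_eq_of_pow_eq _ _ _ fun n => ?_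
    rw [smul_pow, smul_pow, Matrix.smul_mulVec, Matrix.smul_mulVec, (hQP n).1]
  -- norms
  have hnorm_fc : ‖fc‖ = ‖f‖ := by
    rw [Pi.norm_def, Pi.norm_def]
    congr 1
    refine Finset.sup_congr rfl fun y _ => ?_
    rw [hfc]
    simp [nnnorm]
  -- final chain
  have hkey : |(NormedSpace.exp (t • (Qr - 1))).mulVec f x|
      ≤ C1 * ‖f‖ * Real.exp (t * (1 - lam - γ - 1 + δ)) := by
    have h1 : |(NormedSpace.exp (t • (Qr - 1))).mulVec f x|
        = ‖(((NormedSpace.exp (t • (Qr - 1))).mulVec f x : ℝ) : ℂ)‖ := by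
      rw [Complex.norm_real, Real.norm_eq_abs]
    rw [h1, hvec _ x, hstep1, hswitch]
    calc ‖((NormedSpace.exp ((t : ℂ) • (Pc - 1))).mulVec fc) x‖
        ≤ ‖(NormedSpace.exp ((t : ℂ) • (Pc - 1))).mulVec fc‖ :=
          norm_le_pi_norm _ x
    _ ≤ C1 * ‖fc‖ * Real.exp (t * (1 - lam - γ - 1 + δ)) := hC1b fc hfc_orth t ht
    _ = C1 * ‖f‖ * Real.exp (t * (1 - lam - γ - 1 + δ)) := by rw [hnorm_fc]
  have hexp_eq : Real.exp (t * (1 - lam - γ - 1 + δ)) = Real.exp (-t * (lam + γ - δ)) := by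
    congr 1
    ring
  rw [hexp_eq] at hkey
  calc |(NormedSpace.exp (t • (Qr - 1))).mulVec f x|
      ≤ C1 * ‖f‖ * Real.exp (-t * (lam + γ - δ)) := hkey
  _ ≤ C1 * (K * nrm f) * Real.exp (-t * (lam + γ - δ)) := by
      refine mul_le_mul_of_nonneg_right ?_ (Real.exp_nonneg _)
      exact mul_le_mul_of_nonneg_left (hKb f) hC10
  _ = C1 * K * Real.exp (-t * (lam + γ - δ)) * nrm f := by ring
end

section
/- Define the drift operator B_0 := (P^π_D)^T − (1−λ)·I, acting on M_0(D) = {ξ ∈ ℝ^D : ∑_x ξ(x) = 0}. Then every complex eigenvalue τ of B_0 (restricted to M_0(D)) satisfies Re τ ≤ −γ, where γ is the spectral gap of P_D. -/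
open Matrix BigOperators

section Aux

variable {D : Type*} [Fintype D] [DecidableEq D]

private lemma pow_entry_nonneg (P : Matrix D D ℝ) (hnn : ∀ x y, 0 ≤ P x y) (n : ℕ) :
    ∀ x y, 0 ≤ (P ^ n) x y := by
  induction n with
  | zero =>
    intro x y
    rcases eq_or_ne x y with h | h <;> simp [pow_zero, Matrix.one_apply, h]
  | succ n ih =>
    intro x y
    rw [pow_succ, Matrix.mul_apply]
    exact Finset.sum_nonneg fun z _ => mul_nonneg (ih x z) (hnn z y)

private lemma eig_iter (P : Matrix D D ℝ) (π : D → ℝ) (lam : ℝ)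
    (hπeig : Pᵀ.mulVec π = (1 - lam) • π) (n : ℕ) :
    (Pᵀ ^ n).mulVec π = ((1 - lam) ^ n) • π := by
  induction n with
  | zero => simp
  | succ n ih =>
    rw [pow_succ, ← Matrix.mulVec_mulVec, hπeig, Matrix.mulVec_smul, ih, smul_smul,
      pow_succ]
    ring_nf

private lemma eig_entry (P : Matrix D D ℝ) (π : D → ℝ) (lam : ℝ)
    (hπeig : Pᵀ.mulVec π = (1 - lam) • π) (n : ℕ) (y : D) :
    ∑ x, (P ^ n) x y * π x = ((1 - lam) ^ n) * π y := by
  have h := congrFun (eig_iter P π lam hπeig n) y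
  rw [Pi.smul_apply, smul_eq_mul] at h
  rw [← h]
  simp [Matrix.mulVec, dotProduct, ← Matrix.transpose_pow, Matrix.transpose_apply]

private lemma pi_pos (P : Matrix D D ℝ) (hnn : ∀ x y, 0 ≤ P x y)
    (hirr : MatIrreducible P) (π : D → ℝ) (lam : ℝ)
    (hπnn : ∀ x, 0 ≤ π x) (hπsum : ∑ x, π x = 1)
    (hπeig : Pᵀ.mulVec π = (1 - lam) • π) :
    ∀ y, 0 < π y := by
  have hx0 : ∃ x0, 0 < π x0 := by
    by_contra h
    push_neg at h
    have hz : ∀ x, π x = 0 := fun x => le_antisymm (h x) (hπnn x)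
    simp [hz] at hπsum
  obtain ⟨x0, hx0⟩ := hx0
  intro y
  obtain ⟨n, hn⟩ := hirr x0 y
  have h1 : (P ^ n) x0 y * π x0 ≤ ∑ x, (P ^ n) x y * π x :=
    Finset.single_le_sum
      (fun x _ => mul_nonneg (pow_entry_nonneg P hnn n x y) (hπnn x)) (Finset.mem_univ x0)
  rw [eig_entry P π lam hπeig n y] at h1
  have h2 : 0 < ((1 - lam) ^ n) * π y := lt_of_lt_of_le (mul_pos hn hx0) h1
  rcases (hπnn y).lt_or_eq with h | h
  · exact h
  · rw [← h, mul_zero] at h2; exact absurd h2 (lt_irrefl 0)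

private lemma one_sub_lam_pos (hcard : 2 ≤ Fintype.card D)
    (P : Matrix D D ℝ) (hnn : ∀ x y, 0 ≤ P x y)
    (hirr : MatIrreducible P) (π : D → ℝ) (lam : ℝ)
    (hπpos : ∀ x, 0 < π x)
    (hπeig : Pᵀ.mulVec π = (1 - lam) • π) :
    0 < 1 - lam := by
  obtain ⟨x0, y, hxy⟩ := Fintype.exists_pair_of_one_lt_card (α := D) (by omega)
  obtain ⟨n, hn⟩ := hirr x0 y
  have hnne : n ≠ 0 := by
    rintro rfl
    rw [pow_zero, Matrix.one_apply_ne hxy] at hn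
    exact absurd hn (lt_irrefl 0)
  have h1 : (P ^ n) x0 y * π x0 ≤ ∑ x, (P ^ n) x y * π x :=
    Finset.single_le_sum
      (fun x _ => mul_nonneg (pow_entry_nonneg P hnn n x y) (hπpos x).le)
      (Finset.mem_univ x0)
  rw [eig_entry P π lam hπeig n y] at h1
  have h2 : 0 < ((1 - lam) ^ n) * π y := lt_of_lt_of_le (mul_pos hn (hπpos x0)) h1
  have h3 : 0 < (1 - lam) ^ n := by
    by_contra h
    push_neg at h
    nlinarith [hπpos y]
  have h4 : (0:ℝ) ≤ 1 - lam := by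
    have h5 := congrFun hπeig y
    rw [Pi.smul_apply, smul_eq_mul] at h5
    have h6 : Pᵀ.mulVec π y = ∑ x, P x y * π x := by
      simp [Matrix.mulVec, dotProduct, Matrix.transpose_apply]
    have h7 : 0 ≤ ∑ x, P x y * π x :=
      Finset.sum_nonneg fun x _ => mul_nonneg (hnn x y) (hπpos x).le
    rw [h6] at h5
    nlinarith [hπpos y]
  rcases h4.lt_or_eq with h | h
  · exact h
  · rw [← h, zero_pow hnne] at h3; exact absurd h3 (lt_irrefl 0)

private lemma d_nonneg [Nonempty D] (P : Matrix D D ℝ) (hnn : ∀ x y, 0 ≤ P x y)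
    (π : D → ℝ) (lam : ℝ) (hπpos : ∀ x, 0 < π x)
    (hπeig : Pᵀ.mulVec π = (1 - lam) • π) (a : D → ℝ) (d : ℝ)
    (ha : Pᵀ.mulVec a = (1 - lam) • a - d • π) : 0 ≤ d := by
  obtain ⟨x0, -, hmax⟩ :=
    Finset.exists_max_image Finset.univ (fun x => a x / π x) Finset.univ_nonempty
  set r := a x0 / π x0 with hr
  have hle : ∀ x, a x ≤ r * π x := by
    intro x
    have h := hmax x (Finset.mem_univ x)
    rwa [div_le_iff₀ (hπpos x)] at h
  have hax0 : a x0 = r * π x0 := by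
    rw [hr]; exact (div_mul_cancel₀ (a x0) (hπpos x0).ne').symm
  have key : (1 - lam) * a x0 - d * π x0 ≤ r * ((1 - lam) * π x0) := by
    have h1 : Pᵀ.mulVec a x0 = ∑ x, P x x0 * a x := by
      simp [Matrix.mulVec, dotProduct, Matrix.transpose_apply]
    have h2 : ∑ x, P x x0 * a x ≤ ∑ x, P x x0 * (r * π x) :=
      Finset.sum_le_sum fun x _ => mul_le_mul_of_nonneg_left (hle x) (hnn x x0)
    have h3 : ∑ x, P x x0 * (r * π x) = r * ∑ x, P x x0 * π x := by
      rw [Finset.mul_sum]; exact Finset.sum_congr rfl fun x _ => by ring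
    have h4 : ∑ x, P x x0 * π x = (1 - lam) * π x0 := by
      have h5 := congrFun hπeig x0
      rw [Pi.smul_apply, smul_eq_mul] at h5
      rw [← h5]
      simp [Matrix.mulVec, dotProduct, Matrix.transpose_apply]
    have h6 := congrFun ha x0
    rw [Pi.sub_apply, Pi.smul_apply, Pi.smul_apply, smul_eq_mul, smul_eq_mul] at h6
    rw [h1] at h6
    rw [h4] at h3
    linarith [h2, h3, h6]
  rw [hax0] at key
  nlinarith [hπpos x0]

private lemma real_case (hcard : 2 ≤ Fintype.card D)
    (P : Matrix D D ℝ) (hnn : ∀ x y, 0 ≤ P x y)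
    (hirr : MatIrreducible P) (π : D → ℝ) (lam : ℝ)
    (hπpos : ∀ x, 0 < π x) (hπsum : ∑ x, π x = 1)
    (hπeig : Pᵀ.mulVec π = (1 - lam) • π) (a : D → ℝ) (d : ℝ)
    (ha : Pᵀ.mulVec a = (1 - lam) • a - d • π) (hsum : ∑ x, a x = 0) : a = 0 := by
  have : Nonempty D := Fintype.card_pos_iff.mp (by omega)
  have hd1 : 0 ≤ d := d_nonneg P hnn π lam hπpos hπeig a d ha
  have hd2 : 0 ≤ -d := by
    apply d_nonneg P hnn π lam hπpos hπeig (-a) (-d)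
    funext y
    have h := congrFun ha y
    simp only [Matrix.mulVec_neg, Pi.neg_apply, Pi.sub_apply, Pi.smul_apply, smul_eq_mul] at *
    rw [h]; ring
  have hd : d = 0 := le_antisymm (by linarith) hd1
  subst hd
  have ha' : ∀ y, ∑ x, P x y * a x = (1 - lam) * a y := by
    intro y
    have h := congrFun ha y
    rw [Pi.sub_apply, Pi.smul_apply, Pi.smul_apply, smul_eq_mul, smul_eq_mul] at h
    have h1 : Pᵀ.mulVec a y = ∑ x, P x y * a x := by
      simp [Matrix.mulVec, dotProduct, Matrix.transpose_apply]
    rw [h1] at h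
    rw [h]; ring
  have hπ' : ∀ y, ∑ x, P x y * π x = (1 - lam) * π y := by
    intro y
    have h5 := congrFun hπeig y
    rw [Pi.smul_apply, smul_eq_mul] at h5
    rw [← h5]
    simp [Matrix.mulVec, dotProduct, Matrix.transpose_apply]
  obtain ⟨x0, -, hmax⟩ :=
    Finset.exists_max_image Finset.univ (fun x => a x / π x) Finset.univ_nonempty
  set r := a x0 / π x0 with hr
  have hle : ∀ x, a x ≤ r * π x := by
    intro x
    have h := hmax x (Finset.mem_univ x)
    rwa [div_le_iff₀ (hπpos x)] at h
  have hax0 : a x0 = r * π x0 := by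
    rw [hr]; exact (div_mul_cancel₀ (a x0) (hπpos x0).ne').symm
  have closure : ∀ y, a y = r * π y → ∀ x, 0 < P x y → a x = r * π x := by
    intro y hy x hPxy
    have hsum0 : ∑ x, P x y * (r * π x - a x) = 0 := by
      have : ∑ x, P x y * (r * π x - a x)
          = r * (∑ x, P x y * π x) - ∑ x, P x y * a x := by
        rw [Finset.mul_sum, ← Finset.sum_sub_distrib]
        exact Finset.sum_congr rfl fun x _ => by ring
      rw [this, hπ' y, ha' y, hy]; ring
    have hterm := (Finset.sum_eq_zero_iff_of_nonneg
      (fun x _ => mul_nonneg (hnn x y) (sub_nonneg.2 (hle x)))).mp hsum0 x (Finset.mem_univ x)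
    rcases mul_eq_zero.mp hterm with h | h
    · exact absurd h (ne_of_gt hPxy)
    · linarith [sub_eq_zero.mp h]
  have path : ∀ n x y, 0 < (P ^ n) x y → a y = r * π y → a x = r * π x := by
    intro n
    induction n with
    | zero =>
      intro x y h hy
      have hxy : x = y := by
        by_contra hne
        rw [pow_zero, Matrix.one_apply_ne hne] at h
        exact absurd h (lt_irrefl 0)
      exact hxy ▸ hy
    | succ n ih =>
      intro x y h hy
      rw [pow_succ, Matrix.mul_apply] at h
      have : ∃ z ∈ Finset.univ, (0:ℝ) < (P ^ n) x z * P z y := by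
        by_contra hc
        push_neg at hc
        have : ∑ z, (P ^ n) x z * P z y ≤ 0 :=
          Finset.sum_nonpos fun z hz => hc z hz
        linarith
      obtain ⟨z, -, hz⟩ := this
      have h1 : 0 < (P ^ n) x z := by
        rcases mul_pos_iff.mp hz with ⟨h1, _⟩ | ⟨h1, h2⟩
        · exact h1
        · exact absurd (hnn z y) (not_le.mpr h2)
      have h2 : 0 < P z y := by
        rcases mul_pos_iff.mp hz with ⟨_, h2⟩ | ⟨h1, _⟩
        · exact h2
        · exact absurd (pow_entry_nonneg P hnn n x z) (not_le.mpr h1)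
      exact ih x z h1 (closure y hy z h2)
  have hall : ∀ x, a x = r * π x := by
    intro x
    obtain ⟨n, hn⟩ := hirr x x0
    exact path n x x0 hn hax0
  have hrz : r = 0 := by
    have h : ∑ x, a x = r * ∑ x, π x := by
      rw [Finset.mul_sum]
      exact Finset.sum_congr rfl fun x _ => hall x
    rw [hsum, hπsum] at h
    linarith
  funext x
  rw [Pi.zero_apply, hall x, hrz, zero_mul]

end Aux

theorem drift_operator_spectrum
    {D : Type*} [Fintype D] [DecidableEq D]
    (hcard : 2 ≤ Fintype.card D)
    (P : Matrix D D ℝ)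
    (hnn : ∀ x y, 0 ≤ P x y)
    (hrow : ∀ x, ∑ y, P x y ≤ 1)
    (hirr : MatIrreducible P)
    (lam : ℝ)
    (hsr_ub : ∀ σ : ℂ, IsEigval (P.map Complex.ofReal) σ → ‖σ‖ ≤ 1 - lam)
    (hsr_attained : ∃ σ : ℂ, IsEigval (P.map Complex.ofReal) σ ∧ ‖σ‖ = 1 - lam)
    (π : D → ℝ)
    (hπnn : ∀ x, 0 ≤ π x) (hπsum : ∑ x, π x = 1)
    (hπeig : Pᵀ.mulVec π = (1 - lam) • π)
    (γ : ℝ) (hγpos : 0 < γ)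
    (hgap_ub : ∀ σ : ℂ, IsEigval (P.map Complex.ofReal) σ → σ ≠ ((1 - lam : ℝ) : ℂ) →
      σ.re ≤ 1 - lam - γ)
    (hgap_attained : ∃ σ : ℂ, IsEigval (P.map Complex.ofReal) σ ∧ σ ≠ ((1 - lam : ℝ) : ℂ) ∧
      σ.re = 1 - lam - γ) :
    ∀ τ : ℂ,
      (∃ v : D → ℂ, v ≠ 0 ∧ (∑ z, v z = 0) ∧
        (((Matrix.of fun x y => P x y + (1 - ∑ z, P x z) * π y)ᵀ
            - (1 - lam) • (1 : Matrix D D ℝ)).map Complex.ofReal).mulVec v = τ • v) →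
      τ.re ≤ -γ := by
  have hπpos := pi_pos P hnn hirr π lam hπnn hπsum hπeig
  rintro τ ⟨v, hv0, hvsum, heig⟩
  set c : ℂ := ∑ x, ((1 - ∑ z, P x z : ℝ) : ℂ) * v x with hc
  set σ : ℂ := τ + ((1 - lam : ℝ) : ℂ) with hσdef
  -- key entrywise equation
  have hkey : ∀ y, ∑ x, ((P x y : ℝ) : ℂ) * v x = σ * v y - c * ((π y : ℝ) : ℂ) := by
    intro y
    have h := congrFun heig y
    have hlhs : (((Matrix.of fun x y => P x y + (1 - ∑ z, P x z) * π y)ᵀ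
            - (1 - lam) • (1 : Matrix D D ℝ)).map Complex.ofReal).mulVec v y
        = ∑ x, (((P x y : ℝ) : ℂ) * v x + ((π y : ℝ) : ℂ) * (((1 - ∑ z, P x z : ℝ) : ℂ) * v x)
            - (if y = x then ((1 - lam : ℝ) : ℂ) * v x else 0)) := by
      simp only [Matrix.mulVec, dotProduct, Matrix.map_apply, Matrix.sub_apply,
        Matrix.transpose_apply, Matrix.of_apply, Matrix.smul_apply, smul_eq_mul,
        Matrix.one_apply]
      apply Finset.sum_congr rfl
      intro x _
      push_cast
      split <;> simp <;> ring
    rw [hlhs] at h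
    rw [Finset.sum_sub_distrib, Finset.sum_add_distrib, Finset.sum_ite_eq,
      if_pos (Finset.mem_univ y), ← Finset.mul_sum, ← hc] at h
    have hrhs : (τ • v) y = τ * v y := rfl
    rw [hrhs] at h
    have : ∑ x, ((P x y : ℝ) : ℂ) * v x
        = τ * v y + ((1 - lam : ℝ) : ℂ) * v y - ((π y : ℝ) : ℂ) * c := by
      linear_combination h
    rw [this, hσdef]; ring
  by_cases hσ : σ = ((1 - lam : ℝ) : ℂ)
  · -- impossible case: leads to v = 0
    exfalso
    have hre : ∀ (f : D → ℂ) (e : ℝ),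
        (∀ y, ∑ x, ((P x y : ℝ) : ℂ) * v x = ((1 - lam : ℝ) : ℂ) * v y - c * ((π y : ℝ) : ℂ)) →
        True := fun _ _ _ => trivial
    have key' : ∀ y, ∑ x, ((P x y : ℝ) : ℂ) * v x
        = ((1 - lam : ℝ) : ℂ) * v y - c * ((π y : ℝ) : ℂ) := by
      intro y; rw [hkey y, hσ]
    -- real part
    have hare : (fun x => (v x).re) = 0 := by
      apply real_case hcard P hnn hirr π lam hπpos hπsum hπeig _ c.re
      · funext y
        have h := congrArg Complex.re (key' y)
        simpa [Matrix.mulVec, dotProduct, Matrix.transpose_apply, Complex.re_sum,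
          Pi.sub_apply, Pi.smul_apply, smul_eq_mul, mul_comm] using h
      · have h := congrArg Complex.re hvsum
        simpa [Complex.re_sum] using h
    have haim : (fun x => (v x).im) = 0 := by
      apply real_case hcard P hnn hirr π lam hπpos hπsum hπeig _ c.im
      · funext y
        have h := congrArg Complex.im (key' y)
        simpa [Matrix.mulVec, dotProduct, Matrix.transpose_apply, Complex.im_sum,
          Pi.sub_apply, Pi.smul_apply, smul_eq_mul, mul_comm] using h
      · have h := congrArg Complex.im hvsum
        simpa [Complex.im_sum] using h
    apply hv0
    funext x
    have h1 := congrFun hare x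
    have h2 := congrFun haim x
    simp only [Pi.zero_apply] at h1 h2 ⊢
    exact Complex.ext h1 h2
  · -- σ is an eigenvalue of P distinct from 1 - lam
    set α : ℂ := c / (((1 - lam : ℝ) : ℂ) - σ) with hα
    set w : D → ℂ := fun y => v y + α * ((π y : ℝ) : ℂ) with hw
    have hπsumC : ∑ x, ((π x : ℝ) : ℂ) = 1 := by
      push_cast [← hπsum]; norm_cast
    have hne : (((1 - lam : ℝ) : ℂ) - σ) ≠ 0 := sub_ne_zero.mpr (Ne.symm hσ)
    have hαc : α * (((1 - lam : ℝ) : ℂ) - σ) = c := div_mul_cancel₀ c hne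
    have hπC : ∀ y, ∑ x, ((P x y : ℝ) : ℂ) * ((π x : ℝ) : ℂ)
        = ((1 - lam : ℝ) : ℂ) * ((π y : ℝ) : ℂ) := by
      intro y
      have h5 := congrFun hπeig y
      rw [Pi.smul_apply, smul_eq_mul] at h5
      have h6 : Pᵀ.mulVec π y = ∑ x, P x y * π x := by
        simp [Matrix.mulVec, dotProduct, Matrix.transpose_apply]
      rw [h6] at h5
      push_cast [← h5]
      norm_cast
    have hweig : ((P.map Complex.ofReal)ᵀ).mulVec w = σ • w := by
      funext y
      have h1 : ((P.map Complex.ofReal)ᵀ).mulVec w y = ∑ x, ((P x y : ℝ) : ℂ) * w x := by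
        simp [Matrix.mulVec, dotProduct, Matrix.transpose_apply, Matrix.map_apply]
      have h2 : ∑ x, ((P x y : ℝ) : ℂ) * w x
          = (∑ x, ((P x y : ℝ) : ℂ) * v x) + α * ∑ x, ((P x y : ℝ) : ℂ) * ((π x : ℝ) : ℂ) := by
        rw [Finset.mul_sum, ← Finset.sum_add_distrib]
        apply Finset.sum_congr rfl
        intro x _
        rw [hw]; ring
      rw [h1, h2, hkey y, hπC y]
      have hrhs : (σ • w) y = σ * (v y + α * ((π y : ℝ) : ℂ)) := rfl
      rw [hrhs]
      linear_combination ((π y : ℝ) : ℂ) * hαc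
    have hw0 : w ≠ 0 := by
      by_cases hαz : α = 0
      · have : w = v := by funext y; rw [hw]; simp [hαz]
        rw [this]; exact hv0
      · intro hwz
        have hsw : ∑ y, w y = α := by
          rw [hw]
          simp only
          rw [Finset.sum_add_distrib, hvsum, ← Finset.mul_sum, hπsumC]
          ring
        rw [hwz] at hsw
        simp at hsw
        exact hαz hsw.symm
    -- transfer to P via determinant
    have hdetT : (((P.map Complex.ofReal))ᵀ - σ • 1).det = 0 := by
      apply Matrix.exists_mulVec_eq_zero_iff.mp
      refine ⟨w, hw0, ?_⟩
      rw [Matrix.sub_mulVec, Matrix.smul_mulVec, Matrix.one_mulVec, hweig, sub_self]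
    have hdet : ((P.map Complex.ofReal) - σ • 1).det = 0 := by
      rw [← Matrix.det_transpose, Matrix.transpose_sub, Matrix.transpose_smul,
        Matrix.transpose_one]
      exact hdetT
    obtain ⟨u, hu0, hu⟩ := Matrix.exists_mulVec_eq_zero_iff.mpr hdet
    have heigP : IsEigval (P.map Complex.ofReal) σ := by
      refine ⟨u, hu0, ?_⟩
      rw [Matrix.sub_mulVec, Matrix.smul_mulVec, Matrix.one_mulVec] at hu
      exact sub_eq_zero.mp hu
    have hgap := hgap_ub σ heigP hσ
    have hσre : σ.re = τ.re + (1 - lam) := by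
      rw [hσdef]
      simp [Complex.add_re]
    linarith
end
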